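/- Let 𝒳, 𝒜 be nonempty finite types, p_X a probability mass function on 𝒳, ℓ : 𝒳 × 𝒜 → ℝ a nonnegative loss function, and β ≥ 0. Let G(p, q) ≥ 0 be a function of a channel p from 𝒳 to 𝒜 and a strictly positive probability mass function q on 𝒜 such that L(p) := inf_{q > 0} G(p, q) is attained for each p, and suppose L extends to a continuous, convex, nonnegative function on channels vanishing at constant channels. Define F_β(p, q) = Σ_{x,a} p_X(x) p(a|x) ℓ(x,a) + β G(p, q). Suppose (p*, q*) attains the double infimum of F_β over strictly positive channels p and strictly positive q, and set R_β = L(p*). Then inf { Σ_{x,a} p_X(x) p(a|x) ℓ(x,a) : p a channel with L(p) = R_β } + β R_β = F_β(p*, q*). -/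

import Mathlib

open Finset Real

/-- A probability mass function on a finite type. -/
def IsPMF {Z : Type*} [Fintype Z] (p : Z → ℝ) : Prop :=
  (∀ z, 0 ≤ p z) ∧ ∑ z, p z = 1

/-- A channel from `X` to `A`: a family of pmfs on `A` indexed by `X`. -/
def IsChannel {X A : Type*} [Fintype X] [Fintype A] (W : X → A → ℝ) : Prop :=
  ∀ x, IsPMF (W x)

/-- Expected loss `Σ_{x,a} p_X(x) p_{A|X}(a|x) ℓ(x,a)`. -/
noncomputable def expLoss {X A : Type*} [Fintype X] [Fintype A]
    (pX : X → ℝ) (ℓ : X → A → ℝ) (W : X → A → ℝ) : ℝ :=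
  ∑ x, ∑ a, pX x * W x a * ℓ x a

theorem double_infimum_gives_VoI_point
    {X A : Type*} [Fintype X] [Fintype A] [Nonempty X] [Nonempty A]
    (pX : X → ℝ) (hpX : IsPMF pX)
    (ℓ : X → A → ℝ) (hℓ : ∀ x a, 0 ≤ ℓ x a)
    (β : ℝ) (hβ : 0 ≤ β)
    (G : (X → A → ℝ) → (A → ℝ) → ℝ)
    (L : (X → A → ℝ) → ℝ)
    (hGnonneg : ∀ (p : X → A → ℝ) (q : A → ℝ), IsChannel p → IsPMF q → (∀ a, 0 < q a) →
      0 ≤ G p q)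
    -- `L p = inf_{q>0} G(p,q)` and the infimum is attained for each channel `p`
    (hLattained : ∀ p : X → A → ℝ, IsChannel p →
      ∃ q : A → ℝ, IsPMF q ∧ (∀ a, 0 < q a) ∧ G p q = L p)
    (hLinf : ∀ p : X → A → ℝ, IsChannel p →
      ∀ q : A → ℝ, IsPMF q → (∀ a, 0 < q a) → L p ≤ G p q)
    -- `L` is continuous, convex, nonnegative on channels and vanishes at constant channels
    (hLcont : ContinuousOn L {p : X → A → ℝ | IsChannel p})
    (hLconv : ConvexOn ℝ {p : X → A → ℝ | IsChannel p} L)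
    (hLnonneg : ∀ p : X → A → ℝ, IsChannel p → 0 ≤ L p)
    (hLconst : ∀ q : A → ℝ, IsPMF q → L (fun _ => q) = 0)
    -- `(p*, q*)` attains the double infimum of `F_β` over strictly positive `p`, `q`
    (pstar : X → A → ℝ) (hpstar : IsChannel pstar) (hpstarpos : ∀ x a, 0 < pstar x a)
    (qstar : A → ℝ) (hqstar : IsPMF qstar) (hqstarpos : ∀ a, 0 < qstar a)
    (hopt : ∀ (p : X → A → ℝ) (q : A → ℝ), IsChannel p → (∀ x a, 0 < p x a) →
      IsPMF q → (∀ a, 0 < q a) →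
      expLoss pX ℓ pstar + β * G pstar qstar ≤ expLoss pX ℓ p + β * G p q) :
    sInf (expLoss pX ℓ '' {p : X → A → ℝ | IsChannel p ∧ L p = L pstar}) + β * L pstar
      = expLoss pX ℓ pstar + β * G pstar qstar := by
  classical
  -- uniform pmf on A
  set n : ℝ := (Fintype.card A : ℝ) with hn
  have hnpos : 0 < n := by
    simp [hn]
    exact Fintype.card_pos
  have hupmf : IsPMF (fun _ : A => 1 / n) := by
    constructor
    · intro a; positivity
    · simp [hn]
  have huch : IsChannel (fun _ : X => fun _ : A => 1 / n) := fun _ => hupmf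
  have hLu : L (fun _ : X => fun _ : A => 1 / n) = 0 := hLconst _ hupmf
  -- β * G pstar qstar = β * L pstar
  obtain ⟨q0, hq0pmf, hq0pos, hq0eq⟩ := hLattained pstar hpstar
  have h1 : β * G pstar qstar ≤ β * L pstar := by
    have := hopt pstar q0 hpstar hpstarpos hq0pmf hq0pos
    rw [hq0eq] at this
    linarith
  have h2 : β * L pstar ≤ β * G pstar qstar :=
    mul_le_mul_of_nonneg_left (hLinf pstar hpstar qstar hqstar hqstarpos) hβ
  have hGL : β * G pstar qstar = β * L pstar := le_antisymm h1 h2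
  rw [hGL]
  -- key: for every channel p with L p = L pstar, expLoss pstar ≤ expLoss p
  have key : ∀ p : X → A → ℝ, IsChannel p → L p = L pstar →
      expLoss pX ℓ pstar ≤ expLoss pX ℓ p := by
    intro p hp hLp
    have hstep : ∀ ε : ℝ, ε ∈ Set.Ioc (0:ℝ) 1 →
        expLoss pX ℓ pstar ≤ (1 - ε) * expLoss pX ℓ p
          + ε * expLoss pX ℓ (fun _ : X => fun _ : A => 1 / n) := by
      intro ε ⟨hε0, hε1⟩
      set pε : X → A → ℝ := fun x a => (1 - ε) * p x a + ε * (1 / n) with hpε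
      have hpεch : IsChannel pε := by
        intro x
        constructor
        · intro a
          have := (hp x).1 a
          have : 0 ≤ (1 - ε) * p x a := mul_nonneg (by linarith) this
          have h2 : 0 ≤ ε * (1 / n) := by positivity
          simpa [hpε] using add_nonneg this h2
        · simp [hpε, Finset.sum_add_distrib, ← Finset.mul_sum, (hp x).2, hn]
          field_simp
          ring
      have hpεpos : ∀ x a, 0 < pε x a := by
        intro x a
        have h1 : 0 ≤ (1 - ε) * p x a := mul_nonneg (by linarith) ((hp x).1 a)
        have h2 : 0 < ε * (1 / n) := by positivity
        simpa [hpε] using add_pos_of_nonneg_of_pos h1 h2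
      -- convexity bound on L pε
      have hconv := hLconv.2 (Set.mem_setOf.mpr hp) (Set.mem_setOf.mpr huch)
        (by linarith : (0:ℝ) ≤ 1 - ε) (le_of_lt hε0) (by ring)
      have hpεeq : (1 - ε) • p + ε • (fun _ : X => fun _ : A => 1 / n) = pε := by
        funext x a; simp [hpε]
      rw [hpεeq, hLp, hLu] at hconv
      have hconv' : L pε ≤ (1 - ε) * L pstar := by simpa using hconv
      -- optimality at pε with its attaining q
      obtain ⟨qε, hqεpmf, hqεpos, hqεeq⟩ := hLattained pε hpεch
      have hoptε := hopt pε qε hpεch hpεpos hqεpmf hqεpos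
      rw [hqεeq] at hoptε
      have hLpε : β * L pε ≤ β * L pstar := by
        have h3 : (1 - ε) * L pstar ≤ L pstar := by
          nlinarith [hLnonneg pstar hpstar]
        exact mul_le_mul_of_nonneg_left (le_trans hconv' h3) hβ
      have hmix : expLoss pX ℓ pε = (1 - ε) * expLoss pX ℓ p
          + ε * expLoss pX ℓ (fun _ : X => fun _ : A => 1 / n) := by
        unfold expLoss
        rw [Finset.mul_sum, Finset.mul_sum, ← Finset.sum_add_distrib]
        refine Finset.sum_congr rfl fun x _ => ?_
        rw [Finset.mul_sum, Finset.mul_sum, ← Finset.sum_add_distrib]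
        refine Finset.sum_congr rfl fun a _ => ?_
        simp [hpε]; ring
      rw [hGL] at hoptε
      rw [hmix] at hoptε
      linarith
    -- take ε → 0⁺
    have htend : Filter.Tendsto
        (fun ε : ℝ => (1 - ε) * expLoss pX ℓ p
          + ε * expLoss pX ℓ (fun _ : X => fun _ : A => 1 / n))
        (nhdsWithin 0 (Set.Ioi 0)) (nhds (expLoss pX ℓ p)) := by
      have hc : Continuous (fun ε : ℝ => (1 - ε) * expLoss pX ℓ p
          + ε * expLoss pX ℓ (fun _ : X => fun _ : A => 1 / n)) := by fun_prop
      have h0 := hc.tendsto 0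
      simp only [sub_zero, one_mul, zero_mul, add_zero] at h0
      exact h0.mono_left nhdsWithin_le_nhds
    refine ge_of_tendsto htend ?_
    filter_upwards [Ioc_mem_nhdsGT_of_mem (Set.left_mem_Ico.mpr one_pos)] with ε hε
    exact hstep ε hε
  -- compute sInf
  have hmem : expLoss pX ℓ pstar ∈
      expLoss pX ℓ '' {p : X → A → ℝ | IsChannel p ∧ L p = L pstar} :=
    ⟨pstar, ⟨hpstar, rfl⟩, rfl⟩
  have hbdd : ∀ y ∈ expLoss pX ℓ '' {p : X → A → ℝ | IsChannel p ∧ L p = L pstar},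
      expLoss pX ℓ pstar ≤ y := by
    rintro y ⟨p, ⟨hp, hLp⟩, rfl⟩
    exact key p hp hLp
  have : sInf (expLoss pX ℓ '' {p : X → A → ℝ | IsChannel p ∧ L p = L pstar})
      = expLoss pX ℓ pstar :=
    le_antisymm (csInf_le ⟨_, hbdd⟩ hmem) (le_csInf ⟨_, hmem⟩ hbdd)
  rw [this]
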